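/- For all integers n ≥ 10, the tortoise complexity of the Thue–Morse word satisfies ρ^t_t(n) = ρ_t(n) − 4 if the first two binary digits of n − 3 are 1 and 0 (i.e., the second-most-significant bit of n − 3 is 0), and ρ^t_t(n) = ρ_t(n) − 2 otherwise. -/

import Mathlib

/-- The tortoise operation on binary words: if the word contains a 1 (`true`),
delete the first occurrence of 1 and append a 1 at the right end; otherwise do nothing. -/
def tortoise (w : List Bool) : List Bool :=
  if true ∈ w then (w.erase true) ++ [true] else w

/-- `w` is a factor (subword) of the infinite word `x`. -/
def IsFactor (x : ℕ → Bool) (w : List Bool) : Prop :=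
  ∃ i, w = (List.range w.length).map (fun t => x (i + t))

/-- The set of length-`n` factors of `x`. -/
def factorSet (x : ℕ → Bool) (n : ℕ) : Set (List Bool) :=
  {w | w.length = n ∧ IsFactor x w}

/-- The factor complexity of `x`. -/
noncomputable def rho (x : ℕ → Bool) (n : ℕ) : ℕ :=
  (factorSet x n).ncard

/-- The tortoise complexity of `x`: the number of `∼ₜ`-equivalence classes of
length-`n` factors of `x`, i.e. the number of distinct images under `tortoise`. -/
noncomputable def rhoTort (x : ℕ → Bool) (n : ℕ) : ℕ :=
  (tortoise '' factorSet x n).ncard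

/-- The `k`-tortoise complexity of `x`: the number of equivalence classes of
length-`n` factors of `x` under `tortoise^[k] w = tortoise^[k] v`. -/
noncomputable def rhoTortK (k : ℕ) (x : ℕ → Bool) (n : ℕ) : ℕ :=
  ((tortoise^[k]) '' factorSet x n).ncard

/-- `y` is a left special factor of `x`: both `0y` and `1y` are factors of `x`. -/
def LeftSpecial (x : ℕ → Bool) (y : List Bool) : Prop :=
  IsFactor x (false :: y) ∧ IsFactor x (true :: y)

/-- The Thue–Morse sequence: `tm n` is the parity of the number of 1's in the
binary expansion of `n` (`true` = 1). -/
def tm (n : ℕ) : Bool :=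
  decide ((Nat.digits 2 n).sum % 2 = 1)

/-- The regular paperfolding sequence, reindexed so that `pf m = f_{m+1}`:
writing `m + 1 = n' * 2^k` with `n'` odd, `pf m = true` iff `n' ≡ 3 (mod 4)`. -/
def pf (m : ℕ) : Bool :=
  decide ((m + 1) / 2 ^ (padicValNat 2 (m + 1)) % 4 = 3)



lemma tm_zero : tm 0 = false := by simp [tm]

lemma tm_even (n : ℕ) : tm (2*n) = tm n := by
  rcases Nat.eq_zero_or_pos n with h | h
  · simp [h]
  · have : Nat.digits 2 (2*n) = (2*n) % 2 :: Nat.digits 2 (2*n/2) :=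
      Nat.digits_def' (by norm_num) (by omega)
    simp only [tm, this, Nat.mul_mod_right, Nat.mul_div_cancel_left _ (by norm_num : (0:ℕ) < 2)]
    simp [List.sum_cons]

lemma tm_odd (n : ℕ) : tm (2*n+1) = !tm n := by
  have : Nat.digits 2 (2*n+1) = (2*n+1) % 2 :: Nat.digits 2 ((2*n+1)/2) :=
    Nat.digits_def' (by norm_num) (by omega)
  have h2 : (2*n+1) % 2 = 1 := by omega
  have h3 : (2*n+1) / 2 = n := by omega
  rw [h2, h3] at this
  simp only [tm, this, List.sum_cons]
  rcases Nat.even_or_odd (Nat.digits 2 n).sum with ⟨k, hk⟩ | ⟨k, hk⟩ <;> rw [hk] <;>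
    [rw [show (1+(k+k))%2 = 1 by omega, show (k+k)%2 = 0 by omega];
     rw [show 2*k+1 = k+k+1 by ring, show (1+(k+k+1))%2 = 0 by omega,
        show (k+k+1)%2 = 1 by omega]] <;> simp

lemma adj {i : ℕ} (h : tm i = tm (i+1)) : i % 2 = 1 := by
  by_contra hne
  have h0 : i % 2 = 0 := by omega
  obtain ⟨a, rfl⟩ : ∃ a, i = 2*a := ⟨i/2, by omega⟩
  rw [tm_odd, tm_even] at h
  cases tm a <;> simp_all

lemma no_three {i : ℕ} (h1 : tm i = tm (i+1)) (h2 : tm (i+1) = tm (i+2)) : False := by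
  have := adj h1; have := adj h2; omega

lemma alt5 {i : ℕ} (h1 : tm (i+1) = !tm i) (h2 : tm (i+2) = !tm (i+1))
    (h3 : tm (i+3) = !tm (i+2)) (h4 : tm (i+4) = !tm (i+3)) : False := by
  rcases Nat.even_or_odd i with ⟨a, ha⟩ | ⟨a, ha⟩
  · -- i = 2a : tm(i+2)=tm i, tm(i+4)=tm(i+2) give tm(a+1)=tm a, tm(a+2)=tm(a+1)
    have e1 : tm (a+1) = tm a := by
      have : tm (i+2) = tm i := by rw [h2, h1, Bool.not_not]
      rw [show i+2 = 2*(a+1) by omega, show i = 2*a by omega, tm_even, tm_even] at this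
      exact this
    have e2 : tm (a+2) = tm (a+1) := by
      have : tm (i+4) = tm (i+2) := by rw [h4, h3, Bool.not_not]
      rw [show i+4 = 2*(a+2) by omega, show i+2 = 2*(a+1) by omega, tm_even, tm_even] at this
      exact this
    exact no_three (i := a) e1.symm e2.symm
  · -- i = 2a+1
    have e1 : tm (a+1) = tm a := by
      have : tm (i+2) = tm i := by rw [h2, h1, Bool.not_not]
      rw [show i+2 = 2*(a+1)+1 by omega, show i = 2*a+1 by omega, tm_odd, tm_odd] at this
      simpa using this
    have e2 : tm (a+2) = tm (a+1) := by
      have : tm (i+4) = tm (i+2) := by rw [h4, h3, Bool.not_not]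
      rw [show i+4 = 2*(a+2)+1 by omega, show i+2 = 2*(a+1)+1 by omega, tm_odd, tm_odd] at this
      simpa using this
    exact no_three (i := a) e1.symm e2.symm

/-- windows of the Thue-Morse word -/
def W (i : ℕ) : ℕ → List Bool
  | 0 => []
  | n+1 => tm i :: W (i+1) n

@[simp] lemma W_len (i n : ℕ) : (W i n).length = n := by
  induction n generalizing i with
  | zero => rfl
  | succ n ih => simp [W, ih]

lemma W_spec (i n : ℕ) : W i n = (List.range n).map (fun t => tm (i + t)) := by
  induction n generalizing i with
  | zero => rfl
  | succ n ih =>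
      rw [List.range_succ_eq_map]
      simp [W, ih, List.map_map, Function.comp_def]
      intro a _; congr 1; omega

lemma W_tm {i j n : ℕ} (h : W i n = W j n) : ∀ k < n, tm (i+k) = tm (j+k) := by
  rw [W_spec, W_spec] at h
  intro k hk
  have := List.map_inj_left.mp h k (by simp [hk])
  exact this

/-- synchronization: any word of length ≥ 5 occurs at positions of a single parity -/
lemma sync {i j n : ℕ} (h5 : 5 ≤ n) (h : W i n = W j n) : i % 2 = j % 2 := by
  by_cases he : ∃ k, k + 2 ≤ n ∧ tm (i+k) = tm (i+(k+1))
  · obtain ⟨k, hk, hkeq⟩ := he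
    have h1 := adj hkeq
    have h2 : tm (j+k) = tm (j+(k+1)) := by
      rw [← W_tm h k (by omega), ← W_tm h (k+1) (by omega)]; exact hkeq
    have := adj h2
    omega
  · push_neg at he
    have step : ∀ k, k + 2 ≤ n → tm (i+k+1) = !tm (i+k) := by
      intro k hk
      have := he k hk
      rw [show i+(k+1) = i+k+1 by omega] at this
      cases h1 : tm (i+k) <;> cases h2 : tm (i+k+1) <;> simp_all
    have a1 : tm (i+1) = !tm i := by have := step 0 (by omega); simpa using this
    have a2 : tm (i+2) = !tm (i+1) := by have := step 1 (by omega); rwa [show i+1+1 = i+2 by omega] at this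
    have a3 : tm (i+3) = !tm (i+2) := by have := step 2 (by omega); rwa [show i+2+1 = i+3 by omega] at this
    have a4 : tm (i+4) = !tm (i+3) := by have := step 3 (by omega); rwa [show i+3+1 = i+4 by omega] at this
    exact (alt5 a1 a2 a3 a4).elim

lemma W_zero (i : ℕ) : W i 0 = [] := rfl
lemma W_succ (i n : ℕ) : W i (n+1) = tm i :: W (i+1) n := rfl

lemma W_snoc (i n : ℕ) : W i (n+1) = W i n ++ [tm (i+n)] := by
  induction n generalizing i with
  | zero => simp [W]
  | succ n ih =>
      rw [W_succ, ih (i+1), W_succ]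
      simp [Nat.add_assoc, Nat.add_comm 1 n]

/-- the Thue-Morse substitution on words -/
def mu (l : List Bool) : List Bool := l.flatMap (fun b => [b, !b])

@[simp] lemma mu_nil : mu [] = [] := rfl
@[simp] lemma mu_cons (a : Bool) (l : List Bool) : mu (a :: l) = a :: (!a) :: mu l := rfl
@[simp] lemma mu_len (l : List Bool) : (mu l).length = 2 * l.length := by
  induction l with
  | nil => rfl
  | cons a l ih => simp [mu, List.flatMap] at ih ⊢; omega

lemma mu_inj : Function.Injective mu := by
  intro l l' h
  induction l generalizing l' with
  | nil => cases l' with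
    | nil => rfl
    | cons b m => simp [mu] at h
  | cons a l ih =>
      cases l' with
      | nil => simp [mu] at h
      | cons b m =>
          simp only [mu_cons, List.cons.injEq] at h
          obtain ⟨rfl, h3⟩ := h
          rw [ih h3.2]

lemma W_even (i m : ℕ) : W (2*i) (2*m) = mu (W i m) := by
  induction m generalizing i with
  | zero => rfl
  | succ m ih =>
      have key : W (2*i) (2*(m+1)) = tm (2*i) :: tm (2*i+1) :: W (2*(i+1)) (2*m) := by
        rw [show 2*(m+1) = ((2*m)+1)+1 by ring, W_succ, W_succ,
          show 2*i+1+1 = 2*(i+1) by ring]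
      rw [key, ih (i+1), tm_even, tm_odd, W_succ, mu_cons]

lemma W_five (i : ℕ) : W i 5 = tm i :: W (i+1) 4 := rfl

lemma W_ext {i j n : ℕ} (h : ∀ k < n, tm (i+k) = tm (j+k)) : W i n = W j n := by
  rw [W_spec, W_spec]
  exact List.map_inj_left.mpr (fun a ha => h a (List.mem_range.mp ha))

/-- the descended bad configuration: `10τ` and `11τ` both factors with `τ0 = 0` -/
lemma c1 {a b h : ℕ} (h4 : 4 ≤ h)
    (hW : W (a+2) h = W (b+2) h)
    (ha : tm a = true) (ha1 : tm (a+1) = false)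
    (hb : tm b = true) (hb1 : tm (b+1) = true)
    (ht0 : tm (a+2) = false) : False := by
  -- a+1 odd hence a even; b odd
  have haodd : (a+1) % 2 = 1 := adj (by
    have := W_tm hW 0 (by omega)
    simp only [Nat.add_zero] at this
    rw [ha1]; rw [ht0])
  have hbodd : b % 2 = 1 := adj (by rw [hb, hb1])
  obtain ⟨d, rfl⟩ : ∃ d, a = 2*d := ⟨a/2, by omega⟩
  obtain ⟨c, rfl⟩ : ∃ c, b = 2*c+1 := ⟨b/2, by omega⟩
  rcases Nat.lt_or_ge h 5 with h5 | h5
  · -- h = 4 : explicit desubstitution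
    have hh : h = 4 := by omega
    subst hh
    -- letters of τ from both sides
    have τeq : ∀ k < 4, tm (2*d+2+k) = tm (2*c+3+k) := W_tm hW
    -- b-side values
    have hc : tm c = false := by
      have h' := tm_odd c; rw [hb] at h'
      cases hcv : tm c
      · rfl
      · rw [hcv] at h'; exact absurd h' (by decide)
    have hc1 : tm (c+1) = true := by
      have := tm_even (c+1); rw [show 2*(c+1) = 2*c+1+1 by ring, hb1] at this
      exact this.symm
    -- τ0 = !tm (c+1) = false : consistent; τ1 = tm (c+2), τ2 = !tm (c+2), τ3 = tm (c+3)
    have e1 : tm (2*c+4) = tm (c+2) := by rw [show 2*c+4 = 2*(c+2) by ring, tm_even]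
    have e2 : tm (2*c+5) = !tm (c+2) := by rw [show 2*c+5 = 2*(c+2)+1 by ring, tm_odd]
    have e3 : tm (2*c+6) = tm (c+3) := by rw [show 2*c+6 = 2*(c+3) by ring, tm_even]
    -- a-side values
    have hd : tm d = true := by
      have h' := tm_even d; rw [ha] at h'; exact h'.symm
    have f1 : tm (2*d+2) = tm (d+1) := by rw [show 2*d+2 = 2*(d+1) by ring, tm_even]
    have f2 : tm (2*d+3) = !tm (d+1) := by rw [show 2*d+3 = 2*(d+1)+1 by ring, tm_odd]
    have f3 : tm (2*d+4) = tm (d+2) := by rw [show 2*d+4 = 2*(d+2) by ring, tm_even]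
    have f4 : tm (2*d+5) = !tm (d+2) := by rw [show 2*d+5 = 2*(d+2)+1 by ring, tm_odd]
    -- tm (d+1) = false since τ0 = tm (2*d+2) = false
    have hd1 : tm (d+1) = false := by rw [← f1]; exact ht0
    -- τ1 = 1 : τ1 = tm (2*d+3) = !tm (d+1) = true
    have hτ1 : tm (2*d+3) = true := by rw [f2, hd1]; rfl
    -- b-side: τ1 = tm (2*c+4) = tm (c+2)
    have g1 : tm (c+2) = true := by
      rw [← e1]
      have := τeq 1 (by omega)
      rw [show 2*d+2+1 = 2*d+3 by ring, show 2*c+3+1 = 2*c+4 by ring] at this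
      rw [← this]; exact hτ1
    -- τ2 = tm (2*d+4) = tm (2*c+5) = !tm (c+2) = false, so tm (d+2) = false
    have g2 : tm (d+2) = false := by
      rw [← f3]
      have := τeq 2 (by omega)
      rw [show 2*d+2+2 = 2*d+4 by ring, show 2*c+3+2 = 2*c+5 by ring] at this
      rw [this, e2, g1]; rfl
    -- τ3 = tm (2*d+5) = !tm (d+2) = true = tm (c+3)
    have g3 : tm (c+3) = true := by
      rw [← e3]
      have := τeq 3 (by omega)
      rw [show 2*d+2+3 = 2*d+5 by ring, show 2*c+3+3 = 2*c+6 by ring] at this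
      rw [← this, f4, g2]; rfl
    -- now tm (c+1) = tm (c+2) = tm (c+3) = true : impossible
    exact no_three (i := c+1) (by rw [hc1, g1]) (by rw [g1]; rw [show c+1+2 = c+3 by ring, g3])
  · -- h ≥ 5 : parities of the two occurrences of τ differ
    have := sync h5 hW
    omega

/-- bad configuration 2: `100s` and `001s` cannot both be factors for `|s| ≥ 5` -/
lemma b2 {s : List Bool} {i j : ℕ} (hm : 5 ≤ s.length)
    (h1 : (true::false::false::s) = W i (s.length+3))
    (h2 : (false::false::true::s) = W j (s.length+3)) : False := by
  rw [show s.length+3 = (s.length+2)+1 from rfl, W_succ,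
      show s.length+2 = (s.length+1)+1 from rfl, W_succ,
      show s.length+1 = (s.length)+1 from rfl, W_succ] at h1 h2
  simp only [List.cons.injEq] at h1 h2
  obtain ⟨e1, e2, e3, hs1⟩ := h1
  obtain ⟨f1, f2, f3, hs2⟩ := h2
  -- i+1 odd (00 at offsets 1,2), j odd (00 at offsets 0,1)
  have hi : (i+1) % 2 = 1 := adj (by rw [← e2, ← e3])
  have hj : j % 2 = 1 := adj (by rw [← f1, ← f2])
  -- s occurs at i+3 (even) and j+3 (odd)
  have hss : W (i+1+1+1) s.length = W (j+1+1+1) s.length := by rw [← hs1, ← hs2]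
  have := sync (by omega : 5 ≤ s.length) hss
  omega

/-- bad configuration 1: `001s` and `010s` cannot both be factors for `|s| ≥ 7` -/
lemma b1 {s : List Bool} {i j : ℕ} (hm : 7 ≤ s.length)
    (h1 : (false::false::true::s) = W i (s.length+3))
    (h2 : (false::true::false::s) = W j (s.length+3)) : False := by
  rw [show s.length+3 = (s.length+2)+1 from rfl, W_succ,
      show s.length+2 = (s.length+1)+1 from rfl, W_succ,
      show s.length+1 = (s.length)+1 from rfl, W_succ] at h1 h2
  simp only [List.cons.injEq] at h1 h2
  obtain ⟨e1, e2, e3, hs1⟩ := h1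
  obtain ⟨f1, f2, f3, hs2⟩ := h2
  -- i odd, write i = 2a+1
  have hi : i % 2 = 1 := adj (by rw [← e1, ← e2])
  obtain ⟨a, rfl⟩ : ∃ a, i = 2*a+1 := ⟨i/2, by omega⟩
  have hA : tm a = true := by
    have h' := tm_odd a; rw [← e1] at h'
    cases hav : tm a
    · rw [hav] at h'; exact absurd h' (by decide)
    · rfl
  have hA1 : tm (a+1) = false := by
    have h' := tm_even (a+1)
    rw [show 2*(a+1) = 2*a+1+1 by ring, ← e2] at h'
    exact h'.symm
  have hs1' : s = W (2*(a+2)) s.length := by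
    rw [show 2*(a+2) = 2*a+1+1+1+1 by ring]; exact hs1
  -- cross letters between the two occurrences of s
  have hcross : ∀ k < s.length, tm (2*(a+2)+k) = tm (j+1+1+1+k) :=
    W_tm (by rw [← hs1', ← hs2])
  -- case on s0 = tm (j+3), s1 = tm (j+4)
  cases hs0 : tm (j+1+1+1)
  · -- s0 = false : j+2 odd, j = 2b+1
    have hj : (j+1+1) % 2 = 1 := adj (by rw [← f3, hs0])
    obtain ⟨b, rfl⟩ : ∃ b, j = 2*b+1 := ⟨j/2, by omega⟩
    have hB : tm b = true := by
      have h' := tm_odd b; rw [← f1] at h'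
      cases hbv : tm b
      · rw [hbv] at h'; exact absurd h' (by decide)
      · rfl
    have hB1 : tm (b+1) = true := by
      have h' := tm_even (b+1)
      rw [show 2*(b+1) = 2*b+1+1 by ring, ← f2] at h'
      exact h'.symm
    -- the half word τ : W (a+2) h = W (b+2) h
    have hW : W (a+2) ((s.length+1)/2) = W (b+2) ((s.length+1)/2) := by
      apply W_ext
      intro k hk
      have l1 : tm (a+2+k) = tm (2*(a+2)+2*k) := by
        rw [show 2*(a+2)+2*k = 2*(a+2+k) by ring, tm_even]
      have l2 : tm (b+2+k) = tm (2*(b+2)+2*k) := by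
        rw [show 2*(b+2)+2*k = 2*(b+2+k) by ring, tm_even]
      have l3 := hcross (2*k) (by omega)
      rw [show 2*b+1+1+1+1+2*k = 2*(b+2)+2*k by ring] at l3
      rw [l1, l2, l3]
    have ht0 : tm (a+2) = false := by
      have l1 : tm (a+2) = tm (2*(a+2)) := by rw [tm_even]
      have l3 := hcross 0 (by omega)
      simp only [Nat.add_zero] at l3
      rw [l1, l3, hs0]
    exact c1 (by omega) hW hA hA1 hB hB1 ht0
  · -- s0 = true
    cases hs1v : tm (j+1+1+1+1)
    · -- s1 = false : alternating of length 5 at j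
      refine alt5 (i := j) ?_ ?_ ?_ ?_
      · rw [← f2, ← f1]; decide
      · rw [show j+2 = j+1+1 from rfl, ← f3, ← f2]; decide
      · rw [show j+3 = j+1+1+1 from rfl, hs0, ← f3]; decide
      · rw [show j+4 = j+1+1+1+1 from rfl, hs1v, hs0]; decide
    · -- s1 = true : j+3 odd, but s also occurs at the even position 2(a+2)
      have hj3 : (j+1+1+1) % 2 = 1 := adj (by rw [hs0, hs1v])
      have hsync := sync (by omega : 5 ≤ s.length) (by rw [← hs1', ← hs2] :
        W (2*(a+2)) s.length = W (j+1+1+1) s.length)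
      omega

/-- left special factors, in window form -/
def LSW (m : ℕ) : Set (List Bool) :=
  {y | (∃ p, false :: y = W p (m+1)) ∧ (∃ q, true :: y = W q (m+1))}

lemma LSW_length {y : List Bool} {m : ℕ} (hy : y ∈ LSW m) : y.length = m := by
  obtain ⟨⟨p, hp⟩, -⟩ := hy
  have := congrArg List.length hp
  simpa using this

lemma LSW_finite (m : ℕ) : (LSW m).Finite :=
  (List.finite_length_eq Bool m).subset (fun y hy => LSW_length hy)

/-- a left special factor of length ≥ 5 occurs only at even positions -/
lemma LSW_struct {y : List Bool} {m p q : ℕ} (hm : 5 ≤ m)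
    (hp : false :: y = W p (m+1)) (hq : true :: y = W q (m+1)) :
    ∃ a b, p = 2*a+1 ∧ q = 2*b+1 ∧ tm a = true ∧ tm b = false ∧
      y = W (2*(a+1)) m ∧ y = W (2*(b+1)) m := by
  rw [W_succ] at hp hq
  simp only [List.cons.injEq] at hp hq
  obtain ⟨hp0, hpy⟩ := hp
  obtain ⟨hq0, hqy⟩ := hq
  have hyy : W (p+1) m = W (q+1) m := by rw [← hpy, ← hqy]
  have hsync : (p+1) % 2 = (q+1) % 2 := sync (by omega) hyy
  have hcross : tm (p+1) = tm (q+1) := by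
    have := W_tm hyy 0 (by omega)
    simpa using this
  rcases Nat.even_or_odd (p+1) with ⟨a, ha⟩ | ⟨a, ha⟩
  · -- p+1 = 2a, q+1 = 2b : the good case
    obtain ⟨b, hb⟩ : ∃ b, q+1 = 2*b := ⟨(q+1)/2, by omega⟩
    have ha1 : 1 ≤ a := by omega
    have hb1 : 1 ≤ b := by omega
    refine ⟨a-1, b-1, by omega, by omega, ?_, ?_, ?_, ?_⟩
    · have : tm (2*(a-1)+1) = !tm (a-1) := tm_odd (a-1)
      rw [show 2*(a-1)+1 = p by omega, ← hp0] at this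
      cases hv : tm (a-1)
      · rw [hv] at this; exact absurd this (by decide)
      · rfl
    · have : tm (2*(b-1)+1) = !tm (b-1) := tm_odd (b-1)
      rw [show 2*(b-1)+1 = q by omega, ← hq0] at this
      cases hv : tm (b-1)
      · rfl
      · rw [hv] at this; exact absurd this (by decide)
    · rw [hpy]; congr 1; omega
    · rw [hqy]; congr 1; omega
  · -- p+1 odd : impossible
    exfalso
    obtain ⟨b, hb⟩ : ∃ b, q+1 = 2*b+1 := ⟨q/2, by omega⟩
    have e1 : tm (p+1) = !tm a := by rw [show p+1 = 2*a+1 by omega, tm_odd]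
    have e2 : tm p = tm a := by rw [show p = 2*a by omega, tm_even]
    have e3 : tm (q+1) = !tm b := by rw [show q+1 = 2*b+1 by omega, tm_odd]
    have e4 : tm q = tm b := by rw [show q = 2*b by omega, tm_even]
    rw [← hp0] at e2
    rw [← hq0] at e4
    rw [e1, e3, ← e2, ← e4] at hcross
    exact absurd hcross (by decide)

lemma LSW_even {k : ℕ} (hk : 3 ≤ k) : LSW (2*k) = mu '' LSW k := by
  ext y
  constructor
  · rintro ⟨⟨p, hp⟩, ⟨q, hq⟩⟩
    obtain ⟨a, b, -, -, hta, htb, hya, hyb⟩ := LSW_struct (by omega) hp hq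
    have hza : y = mu (W (a+1) k) := by rw [hya, ← W_even]
    have hzb : y = mu (W (b+1) k) := by rw [hyb, ← W_even]
    have hzz : W (b+1) k = W (a+1) k := mu_inj (by rw [← hza, ← hzb])
    refine ⟨W (a+1) k, ⟨⟨b, ?_⟩, ⟨a, ?_⟩⟩, hza.symm⟩
    · rw [W_succ, ← hzz, htb]
    · rw [W_succ, hta]
  · rintro ⟨z, ⟨⟨p, hp⟩, ⟨q, hq⟩⟩, rfl⟩
    rw [W_succ] at hp hq
    simp only [List.cons.injEq] at hp hq
    obtain ⟨hp0, hpz⟩ := hp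
    obtain ⟨hq0, hqz⟩ := hq
    constructor
    · refine ⟨2*q+1, ?_⟩
      rw [show 2*k+1 = (2*k)+1 from rfl, W_succ, tm_odd, ← hq0]
      rw [show 2*q+1+1 = 2*(q+1) by ring, W_even, ← hqz]
      rfl
    · refine ⟨2*p+1, ?_⟩
      rw [show 2*k+1 = (2*k)+1 from rfl, W_succ, tm_odd, ← hp0]
      rw [show 2*p+1+1 = 2*(p+1) by ring, W_even, ← hpz]
      rfl

lemma W_dropLast (i n : ℕ) : (W i (n+1)).dropLast = W i n := by
  rw [W_snoc]; exact List.dropLast_concat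

lemma LSW_odd {k : ℕ} (hk : 2 ≤ k) :
    LSW (2*k+1) = (fun u => (mu u).dropLast) '' LSW (k+1) := by
  ext y
  constructor
  · rintro ⟨⟨p, hp⟩, ⟨q, hq⟩⟩
    obtain ⟨a, b, -, -, hta, htb, hya, hyb⟩ := LSW_struct (by omega) hp hq
    have hua : y = (mu (W (a+1) (k+1))).dropLast := by
      rw [← W_even, show 2*(k+1) = (2*k+1)+1 by ring, W_dropLast, hya]
    have hW : W (a+1) (k+1) = W (b+1) (k+1) := by
      apply W_ext
      intro t ht
      have l1 : tm (a+1+t) = tm (2*(a+1)+2*t) := by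
        rw [show 2*(a+1)+2*t = 2*(a+1+t) by ring, tm_even]
      have l2 : tm (b+1+t) = tm (2*(b+1)+2*t) := by
        rw [show 2*(b+1)+2*t = 2*(b+1+t) by ring, tm_even]
      have l3 := W_tm (i := 2*(a+1)) (j := 2*(b+1)) (by rw [← hya, ← hyb]) (2*t) (by omega)
      rw [l1, l2, l3]
    refine ⟨W (a+1) (k+1), ⟨⟨b, ?_⟩, ⟨a, ?_⟩⟩, hua.symm⟩
    · rw [W_succ b (k+1), htb, hW]
    · rw [W_succ a (k+1), hta]
  · rintro ⟨u, ⟨⟨p, hp⟩, ⟨q, hq⟩⟩, rfl⟩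
    rw [W_succ] at hp hq
    simp only [List.cons.injEq] at hp hq
    obtain ⟨hp0, hpu⟩ := hp
    obtain ⟨hq0, hqu⟩ := hq
    have hy : (mu u).dropLast = W (2*(p+1)) (2*k+1) := by
      rw [hpu, ← W_even, show 2*(k+1) = (2*k+1)+1 by ring, W_dropLast]
    have hy' : (mu u).dropLast = W (2*(q+1)) (2*k+1) := by
      rw [hqu, ← W_even, show 2*(k+1) = (2*k+1)+1 by ring, W_dropLast]
    constructor
    · refine ⟨2*q+1, ?_⟩
      rw [W_succ (2*q+1) (2*k+1), tm_odd q, ← hq0,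
          show 2*q+1+1 = 2*(q+1) by ring, ← hy']
      simp
    · refine ⟨2*p+1, ?_⟩
      rw [W_succ (2*p+1) (2*k+1), tm_odd p, ← hp0,
          show 2*p+1+1 = 2*(p+1) by ring, ← hy]
      simp

lemma mu_append (l l' : List Bool) : mu (l ++ l') = mu l ++ mu l' := by
  simp [mu]

lemma mu_dropLast_injOn {u v : List Bool} (hl : u.length = v.length) (hu : u ≠ [])
    (h : (mu u).dropLast = (mu v).dropLast) : u = v := by
  obtain ⟨l, c, rfl⟩ : ∃ l c, u = l ++ [c] := by
    rcases List.eq_nil_or_concat u with h' | ⟨l, c, h'⟩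
    · exact absurd h' hu
    · exact ⟨l, c, by rw [h', List.concat_eq_append]⟩
  obtain ⟨l', c', rfl⟩ : ∃ l c, v = l ++ [c] := by
    rcases List.eq_nil_or_concat v with h' | ⟨l, c, h'⟩
    · exfalso; rw [h'] at hl; simp at hl
    · exact ⟨l, c, by rw [h', List.concat_eq_append]⟩
  rw [mu_append, mu_append] at h
  simp only [mu] at h
  rw [show ([c] : List Bool).flatMap (fun b => [b, !b]) = [c] ++ [!c] from rfl,
      show ([c'] : List Bool).flatMap (fun b => [b, !b]) = [c'] ++ [!c'] from rfl] at h
  rw [← List.append_assoc, ← List.append_assoc, List.dropLast_concat, List.dropLast_concat] at h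
  have hll : (l.flatMap (fun b => [b, !b])).length = (l'.flatMap (fun b => [b, !b])).length := by
    have := congrArg List.length h
    simp at this ⊢
    simp at hl
    omega
  obtain ⟨h1, h2⟩ := List.append_inj h hll
  have : l = l' := mu_inj h1
  subst this
  simp only [List.cons.injEq] at h2
  rw [h2.1]

lemma tm_1 : tm 1 = true := by rw [show (1:ℕ) = 2*0+1 by norm_num, tm_odd]; simp [tm_zero]
lemma tm_2 : tm 2 = true := by rw [show (2:ℕ) = 2*1 by norm_num, tm_even]; simp [tm_1]
lemma tm_3 : tm 3 = false := by rw [show (3:ℕ) = 2*1+1 by norm_num, tm_odd]; simp [tm_1]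
lemma tm_4 : tm 4 = true := by rw [show (4:ℕ) = 2*2 by norm_num, tm_even]; simp [tm_2]
lemma tm_5 : tm 5 = false := by rw [show (5:ℕ) = 2*2+1 by norm_num, tm_odd]; simp [tm_2]
lemma tm_6 : tm 6 = false := by rw [show (6:ℕ) = 2*3 by norm_num, tm_even]; simp [tm_3]
lemma tm_7 : tm 7 = true := by rw [show (7:ℕ) = 2*3+1 by norm_num, tm_odd]; simp [tm_3]
lemma tm_8 : tm 8 = true := by rw [show (8:ℕ) = 2*4 by norm_num, tm_even]; simp [tm_4]
lemma tm_9 : tm 9 = false := by rw [show (9:ℕ) = 2*4+1 by norm_num, tm_odd]; simp [tm_4]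
lemma tm_10 : tm 10 = false := by rw [show (10:ℕ) = 2*5 by norm_num, tm_even]; simp [tm_5]
lemma tm_11 : tm 11 = true := by rw [show (11:ℕ) = 2*5+1 by norm_num, tm_odd]; simp [tm_5]
lemma tm_12 : tm 12 = false := by rw [show (12:ℕ) = 2*6 by norm_num, tm_even]; simp [tm_6]
lemma tm_13 : tm 13 = true := by rw [show (13:ℕ) = 2*6+1 by norm_num, tm_odd]; simp [tm_6]
lemma tm_14 : tm 14 = true := by rw [show (14:ℕ) = 2*7 by norm_num, tm_even]; simp [tm_7]
lemma tm_15 : tm 15 = false := by rw [show (15:ℕ) = 2*7+1 by norm_num, tm_odd]; simp [tm_7]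

lemma W_four' (i : ℕ) : W i 4 = [tm i, tm (i+1), tm (i+1+1), tm (i+1+1+1)] := rfl
lemma W_five' (i : ℕ) : W i 5 =
    [tm i, tm (i+1), tm (i+1+1), tm (i+1+1+1), tm (i+1+1+1+1)] := rfl

noncomputable def N (m : ℕ) : ℕ := (LSW m).ncard

lemma N_even {k : ℕ} (hk : 3 ≤ k) : N (2*k) = N k := by
  rw [N, N, LSW_even hk, Set.ncard_image_of_injective _ mu_inj]

lemma N_odd {k : ℕ} (hk : 2 ≤ k) : N (2*k+1) = N (k+1) := by
  rw [N, N, LSW_odd hk]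
  apply Set.ncard_image_of_injOn
  intro u hu v hv h
  refine mu_dropLast_injOn (by rw [LSW_length hu, LSW_length hv]) ?_ h
  intro hnil
  have := LSW_length hu
  rw [hnil] at this
  simp at this

lemma LSW_three : LSW 3 = {[false,true,false], [false,true,true], [true,false,false], [true,false,true]} := by
  ext y
  constructor
  · rintro ⟨⟨p, hp⟩, ⟨q, hq⟩⟩
    rw [show (3:ℕ)+1 = 4 from rfl, W_four'] at hp hq
    simp only [List.cons.injEq] at hp hq
    obtain ⟨hp0, hpy⟩ := hp
    obtain ⟨hq0, hqy⟩ := hq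
    cases h1 : tm (p+1) <;> cases h2 : tm (p+1+1) <;> cases h3 : tm (p+1+1+1) <;>
      rw [h1, h2, h3] at hpy <;> have hcomb := hpy.symm.trans hqy <;>
      simp only [List.cons.injEq, and_true] at hcomb <;>
      obtain ⟨g1, g2, g3⟩ := hcomb
    · exact (no_three (i := p) (by rw [h1, ← hp0]) (by rw [h1, h2])).elim
    · exact (no_three (i := p) (by rw [h1, ← hp0]) (by rw [h1, h2])).elim
    · rw [hpy]; simp
    · rw [hpy]; simp
    · rw [hpy]; simp
    · rw [hpy]; simp
    · exact (no_three (i := q) (by rw [← hq0, ← g1]) (by rw [← g1, ← g2])).elim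
    · exact (no_three (i := q) (by rw [← hq0, ← g1]) (by rw [← g1, ← g2])).elim
  · intro hy
    simp only [Set.mem_insert_iff, Set.mem_singleton_iff] at hy
    rcases hy with rfl | rfl | rfl | rfl
    · exact ⟨⟨9, by rw [show (3:ℕ)+1 = 4 from rfl, W_four']; norm_num [tm_9, tm_10, tm_11, tm_12]⟩, ⟨2, by rw [show (3:ℕ)+1 = 4 from rfl, W_four']; norm_num [tm_2, tm_3, tm_4, tm_5]⟩⟩
    · exact ⟨⟨5, by rw [show (3:ℕ)+1 = 4 from rfl, W_four']; norm_num [tm_5, tm_6, tm_7, tm_8]⟩, ⟨11, by rw [show (3:ℕ)+1 = 4 from rfl, W_four']; norm_num [tm_11, tm_12, tm_13, tm_14]⟩⟩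
    · exact ⟨⟨3, by rw [show (3:ℕ)+1 = 4 from rfl, W_four']; norm_num [tm_3, tm_4, tm_5, tm_6]⟩, ⟨7, by rw [show (3:ℕ)+1 = 4 from rfl, W_four']; norm_num [tm_7, tm_8, tm_9, tm_10]⟩⟩
    · exact ⟨⟨10, by rw [show (3:ℕ)+1 = 4 from rfl, W_four']; norm_num [tm_10, tm_11, tm_12, tm_13]⟩, ⟨1, by rw [show (3:ℕ)+1 = 4 from rfl, W_four']; norm_num [tm_1, tm_2, tm_3, tm_4]⟩⟩

lemma LSW_four : LSW 4 = {[false,true,true,false], [true,false,false,true]} := by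
  ext y
  constructor
  · rintro ⟨⟨p, hp⟩, ⟨q, hq⟩⟩
    rw [show (4:ℕ)+1 = 5 from rfl, W_five'] at hp hq
    simp only [List.cons.injEq] at hp hq
    obtain ⟨hp0, hpy⟩ := hp
    obtain ⟨hq0, hqy⟩ := hq
    cases h1 : tm (p+1) <;> cases h2 : tm (p+1+1) <;> cases h3 : tm (p+1+1+1) <;> cases h4 : tm (p+1+1+1+1) <;>
      rw [h1, h2, h3, h4] at hpy <;> have hcomb := hpy.symm.trans hqy <;>
      simp only [List.cons.injEq, and_true] at hcomb <;>
      obtain ⟨g1, g2, g3, g4⟩ := hcomb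
    · exact (no_three (i := p) (by rw [h1, ← hp0]) (by rw [h1, h2])).elim
    · exact (no_three (i := p) (by rw [h1, ← hp0]) (by rw [h1, h2])).elim
    · exact (no_three (i := p) (by rw [h1, ← hp0]) (by rw [h1, h2])).elim
    · exact (no_three (i := p) (by rw [h1, ← hp0]) (by rw [h1, h2])).elim
    · exact absurd (And.intro (adj (i := p) (by rw [h1, ← hp0])) (adj (i := p+1+1+1) (by rw [h3, h4]))) (by omega)
    · exact (alt5 (i := q) (by rw [← g1, ← hq0]; decide) (by rw [← g2, ← g1]; decide) (by rw [← g3, ← g2]; decide) (by rw [← g4, ← g3]; decide)).elim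
    · rw [hpy]; simp
    · exact (no_three (i := p+1+1) (by rw [h2, h3]) (by rw [h3, h4])).elim
    · exact (no_three (i := p+1+1) (by rw [h2, h3]) (by rw [h3, h4])).elim
    · rw [hpy]; simp
    · exact (alt5 (i := p) (by rw [h1, ← hp0]; decide) (by rw [h2, h1]; decide) (by rw [h3, h2]; decide) (by rw [h4, h3]; decide)).elim
    · exact absurd (And.intro (adj (i := q) (by rw [← hq0, ← g1])) (adj (i := q+1+1+1) (by rw [← g3, ← g4]))) (by omega)
    · exact (no_three (i := q) (by rw [← hq0, ← g1]) (by rw [← g1, ← g2])).elim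
    · exact (no_three (i := q) (by rw [← hq0, ← g1]) (by rw [← g1, ← g2])).elim
    · exact (no_three (i := q) (by rw [← hq0, ← g1]) (by rw [← g1, ← g2])).elim
    · exact (no_three (i := q) (by rw [← hq0, ← g1]) (by rw [← g1, ← g2])).elim
  · intro hy
    simp only [Set.mem_insert_iff, Set.mem_singleton_iff] at hy
    rcases hy with rfl | rfl
    · exact ⟨⟨5, by rw [show (4:ℕ)+1 = 5 from rfl, W_five']; norm_num [tm_5, tm_6, tm_7, tm_8, tm_9]⟩, ⟨11, by rw [show (4:ℕ)+1 = 5 from rfl, W_five']; norm_num [tm_11, tm_12, tm_13, tm_14, tm_15]⟩⟩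
    · exact ⟨⟨3, by rw [show (4:ℕ)+1 = 5 from rfl, W_five']; norm_num [tm_3, tm_4, tm_5, tm_6, tm_7]⟩, ⟨7, by rw [show (4:ℕ)+1 = 5 from rfl, W_five']; norm_num [tm_7, tm_8, tm_9, tm_10, tm_11]⟩⟩


lemma N_three : N 3 = 4 := by
  rw [N, LSW_three]
  rw [show ({[false,true,false], [false,true,true], [true,false,false], [true,false,true]} :
      Set (List Bool)) = (↑({[false,true,false], [false,true,true], [true,false,false],
      [true,false,true]} : Finset (List Bool)) : Set (List Bool)) by simp]
  rw [Set.ncard_coe_finset]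
  decide

lemma N_four : N 4 = 2 := by
  rw [N, LSW_four]
  rw [show ({[false,true,true,false], [true,false,false,true]} :
      Set (List Bool)) = (↑({[false,true,true,false], [true,false,false,true]} :
      Finset (List Bool)) : Set (List Bool)) by simp]
  rw [Set.ncard_coe_finset]
  decide

lemma lead_half {d : ℕ} (hd : 4 ≤ d) :
    (d/2) / 2^(Nat.log 2 (d/2) - 1) = d / 2^(Nat.log 2 d - 1) := by
  have hlog : Nat.log 2 (d/2) = Nat.log 2 d - 1 := Nat.log_div_base 2 d
  have hL : 2 ≤ Nat.log 2 d := by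
    refine (Nat.le_log_iff_pow_le (by norm_num) (by omega : d ≠ 0)).mpr ?_
    norm_num; omega
  rw [hlog, Nat.div_div_eq_div_mul,
      show Nat.log 2 d - 1 - 1 = Nat.log 2 d - 2 by omega]
  congr 1
  rw [← pow_succ']
  congr 1
  omega

lemma log_two_two : Nat.log 2 2 = 1 :=
  Nat.log_eq_of_pow_le_of_lt_pow (by norm_num) (by norm_num)

lemma log_two_three : Nat.log 2 3 = 1 :=
  Nat.log_eq_of_pow_le_of_lt_pow (by norm_num) (by norm_num)

lemma count : ∀ m, 3 ≤ m →
    N m = if (m-1) / 2^(Nat.log 2 (m-1) - 1) = 2 then 4 else 2 := by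
  intro m
  induction m using Nat.strong_induction_on with
  | _ m ih =>
    intro hm
    rcases eq_or_ne m 3 with rfl | hm3
    · rw [N_three, show (3:ℕ)-1 = 2 from rfl, log_two_two]
      norm_num
    rcases eq_or_ne m 4 with rfl | hm4
    · rw [N_four, show (4:ℕ)-1 = 3 from rfl, log_two_three]
      norm_num
    have hm5 : 5 ≤ m := by omega
    rcases Nat.even_or_odd m with ⟨k, hk⟩ | ⟨k, hk⟩
    · -- m = 2k
      have hk3 : 3 ≤ k := by omega
      have hmk : m = 2*k := by omega
      subst hmk
      rw [N_even hk3, ih k (by omega) hk3]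
      have hhalf : (2*k-1)/2 = k-1 := by omega
      have := lead_half (d := 2*k-1) (by omega)
      rw [hhalf] at this
      rw [this]
    · -- m = 2k+1
      have hk2 : 2 ≤ k := by omega
      have hmk : m = 2*k+1 := by omega
      subst hmk
      rw [N_odd hk2, ih (k+1) (by omega) (by omega)]
      have hhalf : (2*k+1-1)/2 = k+1-1 := by omega
      have := lead_half (d := 2*k+1-1) (by omega)
      rw [hhalf] at this
      rw [this]

/-- the collision set, in window form -/
def SW (m : ℕ) : Set (List Bool) :=
  {x | (∃ p, false :: true :: x = W p (m+2)) ∧ (∃ q, true :: false :: x = W q (m+2))}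

lemma SW_eq_LSW {m : ℕ} (hm : 5 ≤ m) : SW m = LSW m := by
  ext x
  constructor
  · rintro ⟨⟨p, hp⟩, ⟨q, hq⟩⟩
    rw [show m+2 = (m+1)+1 from rfl, W_succ] at hp hq
    simp only [List.cons.injEq] at hp hq
    exact ⟨⟨q+1, hq.2⟩, ⟨p+1, hp.2⟩⟩
  · rintro ⟨⟨p, hp⟩, ⟨q, hq⟩⟩
    obtain ⟨a, b, hpa, hqb, hta, htb, hxa, hxb⟩ := LSW_struct hm hp hq
    constructor
    · refine ⟨2*b, ?_⟩
      show false :: true :: x = W (2*b) ((m+1)+1)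
      rw [W_succ (2*b) (m+1), tm_even b, htb, ← hqb, ← hq]
    · refine ⟨2*a, ?_⟩
      show true :: false :: x = W (2*a) ((m+1)+1)
      rw [W_succ (2*a) (m+1), tm_even a, hta, ← hpa, ← hp]

lemma mem_factorSet_iff {w : List Bool} {n : ℕ} :
    w ∈ factorSet tm n ↔ w.length = n ∧ ∃ i, w = W i n := by
  unfold factorSet IsFactor
  simp only [Set.mem_setOf_eq]
  constructor
  · rintro ⟨hl, i, hw⟩
    rw [hl] at hw
    exact ⟨hl, i, by rw [hw, W_spec]⟩
  · rintro ⟨hl, i, hw⟩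
    refine ⟨hl, i, ?_⟩
    rw [hl, ← W_spec, ← hw]

/-- shape of a factor of length ≥ 3 -/
lemma factor_shape {w : List Bool} {i k : ℕ} (hw : w = W i (k+3)) :
    (w = true :: W (i+1) (k+2)) ∨
    (w = false :: true :: W (i+1+1) (k+1)) ∨
    (w = false :: false :: true :: W (i+1+1+1) k) := by
  have hexp : W i (k+3) = tm i :: tm (i+1) :: tm (i+1+1) :: W (i+1+1+1) k := rfl
  cases h0 : tm i
  · cases h1 : tm (i+1)
    · cases h2 : tm (i+1+1)
      · exact (no_three (i := i) (by rw [h0, h1]) (by rw [h1, h2])).elim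
      · right; right
        rw [hw, hexp, h0, h1, h2]
    · right; left
      rw [hw, hexp, h0, h1]
      rfl
  · left
    rw [hw, hexp, h0]
    rfl

lemma erase_one (r : List Bool) : (true :: r).erase true = r := by simp
lemma erase_two (r : List Bool) : (false :: true :: r).erase true = false :: r := by
  simp [List.erase_cons]
lemma erase_three (r : List Bool) :
    (false :: false :: true :: r).erase true = false :: false :: r := by
  simp [List.erase_cons]

/-- classification of erase-collisions between factors of length ≥ 10 -/
lemma collision {n : ℕ} (hn : 10 ≤ n) {w v : List Bool}
    (hw : w ∈ factorSet tm n) (hv : v ∈ factorSet tm n) (hne : w ≠ v)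
    (he : w.erase true = v.erase true) :
    (∃ x, w = false::true::x ∧ v = true::false::x) ∨
    (∃ x, w = true::false::x ∧ v = false::true::x) := by
  obtain ⟨k, rfl⟩ : ∃ k, n = k+10 := ⟨n-10, by omega⟩
  obtain ⟨hwl, i, hwW⟩ := mem_factorSet_iff.mp hw
  obtain ⟨hvl, j, hvW⟩ := mem_factorSet_iff.mp hv
  rcases factor_shape (k := k+7) hwW with hws | hws | hws <;>
    rcases factor_shape (k := k+7) hvW with hvs | hvs | hvs
  · -- both start with 1
    exfalso
    rw [hws, hvs, erase_one, erase_one] at he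
    rw [hws, hvs, he] at hne
    exact hne rfl
  · -- w = 1r, v = 01r' : the pair case
    right
    rw [hws, hvs, erase_one, erase_two] at he
    exact ⟨W (j+1+1) (k+8), by rw [hws, he], hvs⟩
  · -- w = 1r, v = 001s : b2
    exfalso
    set s : List Bool := W (j+1+1+1) (k+7) with hsdef
    have hsl : s.length = k+7 := W_len _ _
    rw [hws, hvs, erase_one, erase_three] at he
    have h1 : (true::false::false::s) = W i (k+10) := by rw [← hwW, hws, he]
    have h2 : (false::false::true::s) = W j (k+10) := by rw [← hvW, hvs]
    rw [show (k+10) = (k+7)+3 from rfl, ← hsl] at h1 h2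
    exact b2 (by omega) h1 h2
  · -- w = 01r, v = 1r' : pair, other order
    left
    rw [hws, hvs, erase_two, erase_one] at he
    exact ⟨W (i+1+1) (k+8), hws, by rw [hvs, ← he]⟩
  · -- both 01
    exfalso
    rw [hws, hvs, erase_two, erase_two] at he
    simp only [List.cons.injEq, true_and] at he
    rw [hws, hvs, he] at hne
    exact hne rfl
  · -- w = 01r, v = 001s : b1
    exfalso
    set s : List Bool := W (j+1+1+1) (k+7) with hsdef
    have hsl : s.length = k+7 := W_len _ _
    rw [hws, hvs, erase_two, erase_three] at he
    simp only [List.cons.injEq, true_and] at he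
    have h1 : (false::false::true::s) = W j (k+10) := by rw [← hvW, hvs]
    have h2 : (false::true::false::s) = W i (k+10) := by rw [← hwW, hws, he]
    rw [show (k+10) = (k+7)+3 from rfl, ← hsl] at h1 h2
    exact b1 (by omega) h1 h2
  · -- w = 001s, v = 1r : b2 swapped
    exfalso
    set s : List Bool := W (i+1+1+1) (k+7) with hsdef
    have hsl : s.length = k+7 := W_len _ _
    rw [hws, hvs, erase_three, erase_one] at he
    have h1 : (true::false::false::s) = W j (k+10) := by rw [← hvW, hvs, ← he]
    have h2 : (false::false::true::s) = W i (k+10) := by rw [← hwW, hws]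
    rw [show (k+10) = (k+7)+3 from rfl, ← hsl] at h1 h2
    exact b2 (by omega) h1 h2
  · -- w = 001s, v = 01r : b1 swapped
    exfalso
    set s : List Bool := W (i+1+1+1) (k+7) with hsdef
    have hsl : s.length = k+7 := W_len _ _
    rw [hws, hvs, erase_three, erase_two] at he
    simp only [List.cons.injEq, true_and] at he
    have h1 : (false::false::true::s) = W i (k+10) := by rw [← hwW, hws]
    have h2 : (false::true::false::s) = W j (k+10) := by rw [← hvW, hvs, ← he]
    rw [show (k+10) = (k+7)+3 from rfl, ← hsl] at h1 h2
    exact b1 (by omega) h1 h2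
  · -- both 001
    exfalso
    rw [hws, hvs, erase_three, erase_three] at he
    simp only [List.cons.injEq, true_and] at he
    rw [hws, hvs, he] at hne
    exact hne rfl

lemma append_true_inj : Function.Injective (fun l : List Bool => l ++ [true]) := by
  intro a b h
  simpa using h

lemma conscons_inj : Function.Injective (fun x : List Bool => true :: false :: x) := by
  intro a b h
  simpa using h

lemma key {n : ℕ} (hn : 10 ≤ n) :
    rho tm n = rhoTort tm n + N (n-2) := by
  obtain ⟨k, rfl⟩ : ∃ k, n = k+10 := ⟨n-10, by omega⟩
  classical
  set F := factorSet tm (k+10) with hF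
  have hFfin : F.Finite := (List.finite_length_eq Bool (k+10)).subset (fun w hw => hw.1)
  set S := SW (k+8) with hS
  have hSfin : S.Finite := by rw [hS, SW_eq_LSW (by omega)]; exact LSW_finite _
  set TF := (fun x => true::false::x) '' S with hTF
  have hTFfin : TF.Finite := hSfin.image _
  have hTFsub : TF ⊆ F := by
    rintro w ⟨x, hx, rfl⟩
    obtain ⟨⟨p, hp⟩, ⟨q, hq⟩⟩ := hx
    refine mem_factorSet_iff.mpr ⟨?_, q, hq⟩
    have := congrArg List.length hq
    simp only [List.length_cons, W_len] at this
    simp only [List.length_cons]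
    omega
  have htrue : ∀ w ∈ F, true ∈ w := by
    intro w hw
    obtain ⟨hl, i, hwW⟩ := mem_factorSet_iff.mp hw
    rcases factor_shape (k := k+7) hwW with h | h | h <;> rw [h] <;> simp
  have himg : tortoise '' F = (fun l => l ++ [true]) '' ((fun w => w.erase true) '' F) := by
    rw [← Set.image_comp]
    apply Set.image_congr
    intro w hw
    simp only [Function.comp]
    rw [tortoise, if_pos (htrue w hw)]
  set G := F \ TF with hG
  have hGfin : G.Finite := hFfin.diff
  have himg2 : (fun w => w.erase true) '' F = (fun w => w.erase true) '' G := by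
    apply Set.Subset.antisymm
    · rintro z ⟨w, hwF, rfl⟩
      by_cases hwTF : w ∈ TF
      · obtain ⟨x, hxS, rfl⟩ := hwTF
        have h01 : (false::true::x) ∈ F := by
          obtain ⟨⟨p, hp⟩, ⟨q, hq⟩⟩ := hxS
          refine mem_factorSet_iff.mpr ⟨?_, p, hp⟩
          have := congrArg List.length hp
          simp only [List.length_cons, W_len] at this
          simp only [List.length_cons]
          omega
        have h01G : (false::true::x) ∈ G := by
          refine ⟨h01, ?_⟩
          rintro ⟨x', hx', hx'eq⟩
          simp at hx'eq
        refine ⟨false::true::x, h01G, ?_⟩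
        show (false::true::x).erase true = (true::false::x).erase true
        rw [erase_two, erase_one]
      · exact ⟨w, ⟨hwF, hwTF⟩, rfl⟩
    · rintro z ⟨w, hwG, rfl⟩
      exact ⟨w, hwG.1, rfl⟩
  have hinj : Set.InjOn (fun w => w.erase true) G := by
    intro u hu v hv he
    by_contra hne
    rcases collision (by omega) hu.1 hv.1 hne he with ⟨x, hu1, hv1⟩ | ⟨x, hu1, hv1⟩
    · apply hv.2
      refine ⟨x, ⟨?_, ?_⟩, hv1.symm⟩
      · obtain ⟨hl, i, hWi⟩ := mem_factorSet_iff.mp hu.1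
        exact ⟨i, by rw [← hu1]; exact hWi⟩
      · obtain ⟨hl, j', hWj⟩ := mem_factorSet_iff.mp hv.1
        exact ⟨j', by rw [← hv1]; exact hWj⟩
    · apply hu.2
      refine ⟨x, ⟨?_, ?_⟩, hu1.symm⟩
      · obtain ⟨hl, j', hWj⟩ := mem_factorSet_iff.mp hv.1
        exact ⟨j', by rw [← hv1]; exact hWj⟩
      · obtain ⟨hl, i, hWi⟩ := mem_factorSet_iff.mp hu.1
        exact ⟨i, by rw [← hu1]; exact hWi⟩
  have e1 : rhoTort tm (k+10) = G.ncard := by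
    rw [rhoTort, ← hF, himg, Set.ncard_image_of_injective _ append_true_inj, himg2,
        Set.ncard_image_of_injOn hinj]
  have e2 : G.ncard = F.ncard - TF.ncard := Set.ncard_diff hTFsub hTFfin
  have e3 : TF.ncard = S.ncard := Set.ncard_image_of_injective _ conscons_inj
  have e4 : S.ncard = N (k+8) := by rw [hS, SW_eq_LSW (by omega), N]
  have e5 : TF.ncard ≤ F.ncard := Set.ncard_le_ncard hTFsub hFfin
  have e6 : rho tm (k+10) = F.ncard := by rw [rho, hF]
  rw [show k+10-2 = k+8 by omega]
  omega

section DEV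
end DEV
/-- for all `n ≥ 10`, the tortoise complexity of the Thue–Morse word
satisfies `ρ^t_t(n) = ρ_t(n) - 4` if the first two binary digits of `n - 3` are
`1` and `0` (i.e. `(n-3) / 2^(⌊log₂(n-3)⌋ - 1) = 2`), and
`ρ^t_t(n) = ρ_t(n) - 2` otherwise. -/
theorem stmt_10 (n : ℕ) (hn : 10 ≤ n) :
    ((n - 3) / 2 ^ (Nat.log 2 (n - 3) - 1) = 2 →
      rhoTort tm n = rho tm n - 4) ∧
    ((n - 3) / 2 ^ (Nat.log 2 (n - 3) - 1) ≠ 2 →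
      rhoTort tm n = rho tm n - 2) := by
  have hkey := key hn
  have hcount := count (n-2) (by omega)
  rw [show n-2-1 = n-3 by omega] at hcount
  constructor
  · intro hc
    rw [if_pos hc] at hcount
    omega
  · intro hc
    rw [if_neg hc] at hcount
    omega
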